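/- Let H₁, H₂ be complex Hilbert spaces and ρ a normal state on B(H₂). Then Π_ρ = id ⊗ ρ : B(H₁⊗H₂) → B(H₁), restricted to any bounded subset of its domain, is continuous when both domain and codomain carry the strong operator topology. -/

import Mathlib

open Filter Topology


/-- Let `H₁, H₂` be complex Hilbert spaces, `HK` their Hilbert tensor
product (presented by `tmul`), and `ρ` a *normal* state on `B(H₂)`, given by a density matrix
with orthonormal eigenvectors `ξ n` and nonnegative weights `w n` summing to `1`.  Let
`Pρ = id ⊗ ρ : B(H₁⊗H₂) → B(H₁)` be the corresponding map, characterized by its matrix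
elements `⟨η, Pρ(a) φ⟩ = ∑ₙ w n ⟨η ⊗ ξ n, a (φ ⊗ ξ n)⟩`.  Then `Pρ`, restricted to any
bounded subset of its domain, is continuous for the strong operator topologies: for every
norm-bounded net `Aα` converging strongly to `a`, `Pρ(Aα)` converges strongly to `Pρ(a)`. -/
theorem partial_state_strong_continuity_on_bounded_sets
    {H₁ H₂ HK : Type*}
    [NormedAddCommGroup H₁] [InnerProductSpace ℂ H₁] [CompleteSpace H₁]
    [NormedAddCommGroup H₂] [InnerProductSpace ℂ H₂] [CompleteSpace H₂]
    [NormedAddCommGroup HK] [InnerProductSpace ℂ HK] [CompleteSpace HK]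
    (tmul : H₁ →ₗ[ℂ] H₂ →ₗ[ℂ] HK)
    (hinner : ∀ (a c : H₁) (b d : H₂),
      (inner ℂ (tmul a b) (tmul c d) : ℂ) = (inner ℂ a c : ℂ) * (inner ℂ b d : ℂ))
    (hdense : Dense ((Submodule.span ℂ {z : HK | ∃ a b, z = tmul a b} :
        Submodule ℂ HK) : Set HK))
    (ξ : ℕ → H₂) (hξ : Orthonormal ℂ ξ)
    (w : ℕ → ℝ) (hw : ∀ n, 0 ≤ w n) (hwsum : HasSum w 1)
    (Pρ : (HK →L[ℂ] HK) →ₗ[ℂ] (H₁ →L[ℂ] H₁))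
    (hP : ∀ (a : HK →L[ℂ] HK) (η φ : H₁),
      HasSum (fun n : ℕ => (w n : ℂ) * (inner ℂ (tmul η (ξ n)) (a (tmul φ (ξ n))) : ℂ))
        (inner ℂ η (Pρ a φ) : ℂ))
    {ι : Type*} (l : Filter ι) (Aα : ι → HK →L[ℂ] HK) (a : HK →L[ℂ] HK) (M : ℝ)
    (hbdd : ∀ i, ‖Aα i‖ ≤ M)
    (hconv : ∀ ζ : HK, Filter.Tendsto (fun i => Aα i ζ) l (nhds (a ζ)))
    (φ : H₁) :
    Filter.Tendsto (fun i => Pρ (Aα i) φ) l (nhds (Pρ a φ)) := by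
  have hξn : ∀ n, (inner ℂ (ξ n) (ξ n) : ℂ) = 1 := fun n => by
    rw [inner_self_eq_norm_sq_to_K, hξ.1 n]; norm_num
  -- tmul x ξn has norm ‖x‖
  have htn : ∀ (x : H₁) (n : ℕ), ‖tmul x (ξ n)‖ = ‖x‖ := by
    intro x n
    have h := hinner x x (ξ n) (ξ n)
    rw [hξn, mul_one, inner_self_eq_norm_sq_to_K, inner_self_eq_norm_sq_to_K] at h
    have h' : ‖tmul x (ξ n)‖ ^ 2 = ‖x‖ ^ 2 := by exact_mod_cast h
    exact (sq_eq_sq₀ (norm_nonneg _) (norm_nonneg _)).mp h'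
  -- summability of the weighted norms
  have hsumm : ∀ b : HK →L[ℂ] HK,
      Summable (fun n => w n * ‖b (tmul φ (ξ n))‖) := by
    intro b
    refine Summable.of_nonneg_of_le (fun n => mul_nonneg (hw n) (norm_nonneg _)) (fun n => ?_)
      (hwsum.summable.mul_right (‖b‖ * ‖φ‖))
    have h1 : ‖b (tmul φ (ξ n))‖ ≤ ‖b‖ * ‖φ‖ := by
      calc ‖b (tmul φ (ξ n))‖ ≤ ‖b‖ * ‖tmul φ (ξ n)‖ := b.le_opNorm _
        _ = ‖b‖ * ‖φ‖ := by rw [htn]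
    exact mul_le_mul_of_nonneg_left h1 (hw n)
  -- key inequality
  have key : ∀ b : HK →L[ℂ] HK,
      ‖Pρ b φ‖ ≤ ∑' n, w n * ‖b (tmul φ (ξ n))‖ := by
    intro b
    set x := Pρ b φ with hx
    have hs := hP b x φ
    set S := ∑' n, w n * ‖b (tmul φ (ξ n))‖ with hS
    have hterm : ∀ n, ‖(w n : ℂ) * (inner ℂ (tmul x (ξ n)) (b (tmul φ (ξ n))) : ℂ)‖
        ≤ ‖x‖ * (w n * ‖b (tmul φ (ξ n))‖) := by
      intro n
      rw [norm_mul]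
      have : ‖(inner ℂ (tmul x (ξ n)) (b (tmul φ (ξ n))) : ℂ)‖
          ≤ ‖x‖ * ‖b (tmul φ (ξ n))‖ := by
        calc ‖(inner ℂ (tmul x (ξ n)) (b (tmul φ (ξ n))) : ℂ)‖
            ≤ ‖tmul x (ξ n)‖ * ‖b (tmul φ (ξ n))‖ := norm_inner_le_norm _ _
          _ = ‖x‖ * ‖b (tmul φ (ξ n))‖ := by rw [htn]
      have hwn : ‖((w n : ℝ) : ℂ)‖ = w n := by
        rw [Complex.norm_real, Real.norm_eq_abs, abs_of_nonneg (hw n)]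
      rw [hwn]
      calc w n * ‖(inner ℂ (tmul x (ξ n)) (b (tmul φ (ξ n))) : ℂ)‖
          ≤ w n * (‖x‖ * ‖b (tmul φ (ξ n))‖) :=
            mul_le_mul_of_nonneg_left this (hw n)
        _ = ‖x‖ * (w n * ‖b (tmul φ (ξ n))‖) := by ring
    have hnsum : Summable (fun n =>
        ‖(w n : ℂ) * (inner ℂ (tmul x (ξ n)) (b (tmul φ (ξ n))) : ℂ)‖) :=
      Summable.of_nonneg_of_le (fun n => norm_nonneg _) hterm ((hsumm b).mul_left ‖x‖)
    have h1 : ‖x‖ ^ 2 ≤ ‖x‖ * S := by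
      calc ‖x‖ ^ 2 = ‖(inner ℂ x x : ℂ)‖ := by
            rw [inner_self_eq_norm_sq_to_K]; rw [norm_pow, RCLike.norm_ofReal]
            simp
        _ ≤ ∑' n, ‖(w n : ℂ) * (inner ℂ (tmul x (ξ n)) (b (tmul φ (ξ n))) : ℂ)‖ := by
            rw [← hs.tsum_eq]; exact norm_tsum_le_tsum_norm hnsum
        _ ≤ ∑' n, ‖x‖ * (w n * ‖b (tmul φ (ξ n))‖) :=
            Summable.tsum_le_tsum hterm hnsum ((hsumm b).mul_left ‖x‖)
        _ = ‖x‖ * S := tsum_mul_left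
    rcases eq_or_lt_of_le (norm_nonneg x) with h0 | h0
    · rw [← h0]
      exact tsum_nonneg fun n => mul_nonneg (hw n) (norm_nonneg _)
    · have := h1
      rw [sq] at this
      exact le_of_mul_le_mul_left this h0
  -- conclude
  rw [tendsto_iff_norm_sub_tendsto_zero]
  have hbound : ∀ i, ‖Pρ (Aα i) φ - Pρ a φ‖
      ≤ ∑' n, w n * ‖(Aα i - a) (tmul φ (ξ n))‖ := by
    intro i
    have : Pρ (Aα i) φ - Pρ a φ = Pρ (Aα i - a) φ := by
      rw [map_sub, ContinuousLinearMap.sub_apply]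
    rw [this]
    exact key _
  refine squeeze_zero (fun i => norm_nonneg _) hbound ?_
  rw [Metric.tendsto_nhds]
  intro ε hε
  set C : ℝ := (|M| + ‖a‖) * ‖φ‖ + 1 with hC
  have hCpos : 0 < C := by positivity
  -- tail control
  have htail := tendsto_tsum_compl_atTop_zero w
  have hsmall : ∃ F : Finset ℕ, ∑' n : {x // x ∉ F}, w n < ε / (2 * C) := by
    have := (htail.eventually (gt_mem_nhds (by positivity : (0:ℝ) < ε / (2 * C)))).exists
    exact this
  obtain ⟨F, hF⟩ := hsmall
  -- finite part tends to 0
  have hfin : Tendsto (fun i => ∑ n ∈ F, w n * ‖(Aα i - a) (tmul φ (ξ n))‖) l (𝓝 0) := by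
    have : Tendsto (fun i => ∑ n ∈ F, w n * ‖(Aα i - a) (tmul φ (ξ n))‖) l
        (𝓝 (∑ n ∈ F, (0:ℝ))) := by
      refine tendsto_finset_sum _ fun n _ => ?_
      have h1 : Tendsto (fun i => (Aα i - a) (tmul φ (ξ n))) l (𝓝 0) := by
        have := (hconv (tmul φ (ξ n))).sub (tendsto_const_nhds (x := a (tmul φ (ξ n))))
        simpa using this
      have := (h1.norm.const_mul (w n))
      simpa using this
    simpa using this
  filter_upwards [hfin.eventually (gt_mem_nhds (by positivity : (0:ℝ) < ε / 2))] with i hi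
  -- bound the tsum
  have hnn : ∀ n, 0 ≤ w n * ‖(Aα i - a) (tmul φ (ξ n))‖ := fun n => mul_nonneg (hw n) (norm_nonneg _)
  have hsi := hsumm (Aα i - a)
  have hsplit := Summable.sum_add_tsum_subtype_compl hsi F
  have htailbound : ∑' n : {x // x ∉ F}, w n * ‖(Aα i - a) (tmul φ (ξ n))‖
      ≤ C * ∑' n : {x // x ∉ F}, w n := by
    rw [← tsum_mul_left]
    refine Summable.tsum_le_tsum (fun n => ?_) (hsi.subtype _) ((hwsum.summable.subtype _).mul_left C)
    have hb : ‖(Aα i - a) (tmul φ (ξ n))‖ ≤ (|M| + ‖a‖) * ‖φ‖ := by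
      calc ‖(Aα i - a) (tmul φ (ξ n))‖ ≤ ‖Aα i - a‖ * ‖tmul φ (ξ n)‖ :=
            (Aα i - a).le_opNorm _
        _ = ‖Aα i - a‖ * ‖φ‖ := by rw [htn]
        _ ≤ (|M| + ‖a‖) * ‖φ‖ := by
            have : ‖Aα i - a‖ ≤ |M| + ‖a‖ :=
              (norm_sub_le _ _).trans (add_le_add ((hbdd i).trans (le_abs_self M)) le_rfl)
            exact mul_le_mul_of_nonneg_right this (norm_nonneg _)
    calc w (n:ℕ) * ‖(Aα i - a) (tmul φ (ξ (n:ℕ)))‖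
        ≤ w (n:ℕ) * ((|M| + ‖a‖) * ‖φ‖) := mul_le_mul_of_nonneg_left hb (hw _)
      _ ≤ C * w (n:ℕ) := by
          rw [hC]; nlinarith [hw (n:ℕ)]
  have htsum_nonneg : (0:ℝ) ≤ ∑' n, w n * ‖(Aα i - a) (tmul φ (ξ n))‖ :=
    tsum_nonneg hnn
  rw [Real.dist_eq, sub_zero, abs_of_nonneg htsum_nonneg]
  have h2 : ∑' n : {x // x ∉ F}, w n * ‖(Aα i - a) (tmul φ (ξ n))‖ < ε / 2 := by
    have hwt : (0:ℝ) ≤ ∑' n : {x // x ∉ F}, w n :=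
      tsum_nonneg fun n => hw _
    calc ∑' n : {x // x ∉ F}, w n * ‖(Aα i - a) (tmul φ (ξ n))‖
        ≤ C * ∑' n : {x // x ∉ F}, w n := htailbound
      _ < C * (ε / (2 * C)) := by
          rcases eq_or_lt_of_le hwt with h | h
          · rw [← h, mul_zero]; positivity
          · exact mul_lt_mul_of_pos_left hF hCpos
      _ = ε / 2 := by field_simp
  calc ∑' n, w n * ‖(Aα i - a) (tmul φ (ξ n))‖
      = ∑ n ∈ F, w n * ‖(Aα i - a) (tmul φ (ξ n))‖
        + ∑' n : {x // x ∉ F}, w n * ‖(Aα i - a) (tmul φ (ξ n))‖ := hsplit.symm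
    _ < ε / 2 + ε / 2 := add_lt_add hi h2
    _ = ε := by ring
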